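/- Decomposition of a closed real subspace: let H be a complex Hilbert space and L ⊆ H a closed real-linear subspace. Define L' := {g ∈ H : Im⟪f,g⟫ = 0 for all f ∈ L}, L₀ := the orthogonal complement of the closure of L + iL, L∞ := L ∩ iL, La := L ∩ L', La⊕ := La + iLa, Lf⊕ := the orthogonal complement (in H, with respect to Re⟪·,·⟫) of L₀ ⊕ La⊕ ⊕ L∞, and Lf := Lf⊕ ∩ L. Then H is the internal orthogonal direct sum H = L₀ ⊕ La⊕ ⊕ Lf⊕ ⊕ L∞, and under this decomposition L = La ⊕ Lf ⊕ L∞ (i.e. every element of L is uniquely a sum of elements of La, Lf and L∞, with zero component in L₀). -/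

import Mathlib

attribute [local instance] InnerProductSpace.complexToReal

variable {H : Type*} [NormedAddCommGroup H] [InnerProductSpace ℂ H]
set_option linter.unusedSectionVars false

/-- Multiplication by `i`, as a real-linear map on a complex Hilbert space. -/
noncomputable def mulI : H →ₗ[ℝ] H where
  toFun x := Complex.I • x
  map_add' x y := by simp [smul_add]
  map_smul' r x := smul_comm Complex.I r x

/-- The symplectic complement `L' = {g | Im⟪f,g⟫ = 0 ∀ f ∈ L}` of a real subspace `L`,
as a real subspace. -/
noncomputable def sympCompl (L : Submodule ℝ H) : Submodule ℝ H where
  carrier := {g | ∀ f ∈ L, (inner ℂ f g : ℂ).im = 0}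
  add_mem' := by
    intro a b ha hb f hf
    rw [inner_add_right]
    simp [ha f hf, hb f hf]
  zero_mem' := by
    intro f hf
    simp
  smul_mem' := by
    intro r g hg f hf
    rw [RCLike.real_smul_eq_coe_smul (K := ℂ), inner_smul_right]
    simp [Complex.mul_im, hg f hf]

/-- The nonseparating part `L∞ = L ∩ iL`. -/
noncomputable def nonsepPart (L : Submodule ℝ H) : Submodule ℝ H :=
  L ⊓ L.map mulI

/-- The abelian part `La = L ∩ L'`. -/
noncomputable def abelPart (L : Submodule ℝ H) : Submodule ℝ H :=
  L ⊓ sympCompl L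

/-- `La⊕ = La + iLa`. -/
noncomputable def abelPartC (L : Submodule ℝ H) : Submodule ℝ H :=
  abelPart L ⊔ (abelPart L).map mulI

/-- `L₀ = (closure of (L + iL))ᗮ`, orthogonal complement w.r.t. the real inner product. -/
noncomputable def zeroPart (L : Submodule ℝ H) : Submodule ℝ H :=
  ((L ⊔ L.map mulI).topologicalClosure)ᗮ

/-- `Lf⊕ = (L₀ ⊕ La⊕ ⊕ L∞)ᗮ`. -/
noncomputable def factPartC (L : Submodule ℝ H) : Submodule ℝ H :=
  (zeroPart L ⊔ abelPartC L ⊔ nonsepPart L)ᗮ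

/-- The factorial part `Lf = Lf⊕ ∩ L`. -/
noncomputable def factPart (L : Submodule ℝ H) : Submodule ℝ H :=
  factPartC L ⊓ L


section Aux

variable [CompleteSpace H]

lemma rinner_eq (x y : H) : (inner ℝ x y : ℝ) = (inner ℂ x y : ℂ).re := rfl

lemma map_mulI_isClosed {S : Submodule ℝ H} (h : IsClosed (S : Set H)) :
    IsClosed ((S.map mulI : Submodule ℝ H) : Set H) := by
  have : ((S.map mulI : Submodule ℝ H) : Set H) = (fun x : H => (-Complex.I) • x) ⁻¹' S := by
    ext x
    simp only [Set.mem_preimage, SetLike.mem_coe, Submodule.mem_map]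
    constructor
    · rintro ⟨y, hy, rfl⟩
      show (-Complex.I) • (Complex.I • y) ∈ S
      rw [smul_smul]
      simpa using hy
    · intro hx
      exact ⟨(-Complex.I) • x, hx, by show Complex.I • (-Complex.I) • x = x; rw [smul_smul]; simp⟩
  rw [this]
  exact h.preimage (continuous_const_smul _)

lemma sympCompl_isClosed (L : Submodule ℝ H) : IsClosed ((sympCompl L : Submodule ℝ H) : Set H) := by
  have : ((sympCompl L : Submodule ℝ H) : Set H) = ⋂ f ∈ L, {g : H | (inner ℂ f g : ℂ).im = 0} := by
    ext g
    simp only [Set.mem_iInter, Set.mem_setOf_eq, SetLike.mem_coe]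
    rfl
  rw [this]
  exact isClosed_biInter fun f _ =>
    isClosed_eq (Complex.continuous_im.comp (Continuous.inner continuous_const continuous_id))
      continuous_const

/-- Sum of two orthogonal closed subspaces is closed. -/
lemma isClosed_sup_of_ortho {U V : Submodule ℝ H} (hU : IsClosed (U : Set H))
    (hV : IsClosed (V : Set H)) (hUV : U ⟂ V) :
    IsClosed ((U ⊔ V : Submodule ℝ H) : Set H) := by
  haveI : CompleteSpace U := hU.completeSpace_coe
  set P : H →L[ℝ] H := U.subtypeL.comp (U.orthogonalProjectionOnto) with hP
  have hset : ((U ⊔ V : Submodule ℝ H) : Set H) = (fun x => x - P x) ⁻¹' (V : Set H) := by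
    ext x
    simp only [Set.mem_preimage, SetLike.mem_coe]
    constructor
    · intro hx
      rw [Submodule.mem_sup] at hx
      obtain ⟨u, hu, v, hv, rfl⟩ := hx
      have h1 : ((U.orthogonalProjectionOnto u : U) : H) = u := Submodule.starProjection_eq_self_iff.mpr hu
      have h2 : U.orthogonalProjectionOnto v = 0 :=
        Submodule.orthogonalProjectionOnto_apply_of_mem_orthogonal (hUV.ge hv)
      have : P (u + v) = u := by
        simp only [hP, ContinuousLinearMap.comp_apply, map_add, h2, Submodule.subtypeL_apply,
          Submodule.coe_add, h1, ZeroMemClass.coe_zero, add_zero]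
      rw [this]
      simpa using hv
    · intro hx
      have hPx : P x ∈ U := SetLike.coe_mem _
      have : x = P x + (x - P x) := by abel
      rw [this]
      exact Submodule.add_mem_sup hPx hx
  rw [hset]
  exact hV.preimage (continuous_id.sub P.continuous)

/-- Complex orthogonality of the nonseparating part and the abelian part. -/
lemma inner_nonsep_abel_eq_zero (L : Submodule ℝ H) {n a : H} (hn : n ∈ nonsepPart L)
    (ha : a ∈ abelPart L) : (inner ℂ n a : ℂ) = 0 := by
  obtain ⟨hn1, m, hm, rfl⟩ := hn
  obtain ⟨ha1, ha2⟩ := ha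
  have h1 : (inner ℂ (mulI m) a : ℂ).im = 0 := ha2 _ hn1
  have h2 : (inner ℂ m a : ℂ).im = 0 := ha2 m hm
  have key : (inner ℂ (mulI m) a : ℂ) = -Complex.I * (inner ℂ m a : ℂ) := by
    show (inner ℂ (Complex.I • m) a : ℂ) = _
    rw [inner_smul_left]
    simp [Complex.ext_iff]
  rw [key]
  rw [key] at h1
  have h3 : (inner ℂ m a : ℂ).re = 0 := by
    simpa [Complex.mul_im, h2] using h1
  simp [Complex.ext_iff, Complex.mul_re, Complex.mul_im, h2, h3]

/-- `i · La` is orthogonal (w.r.t. the real inner product) to all of `L`. -/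
lemma rinner_mulI_abel_left (L : Submodule ℝ H) {c z : H} (hc : c ∈ abelPart L) (hz : z ∈ L) :
    (inner ℝ (mulI c) z : ℝ) = 0 := by
  obtain ⟨hc1, hc2⟩ := hc
  have him : (inner ℂ z c : ℂ).im = 0 := hc2 z hz
  have him' : (inner ℂ c z : ℂ).im = 0 := by
    have hconj : (inner ℂ c z : ℂ) = (starRingEnd ℂ) (inner ℂ z c : ℂ) := (inner_conj_symm c z).symm
    rw [hconj, Complex.conj_im, him, neg_zero]
  rw [rinner_eq]
  show (inner ℂ (Complex.I • c) z : ℂ).re = 0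
  rw [inner_smul_left]
  simpa [Complex.mul_re] using him'

end Aux

/-- Decomposition of a closed real subspace `L` of a complex Hilbert space `H`:
`H` is the internal orthogonal direct sum `L₀ ⊕ La⊕ ⊕ Lf⊕ ⊕ L∞`, and under this decomposition
`L = La ⊕ Lf ⊕ L∞` (orthogonal direct sum, with zero component in `L₀`). -/
theorem subspace_decomposition [CompleteSpace H]
    (L : Submodule ℝ H) (hL : IsClosed (L : Set H)) :
    (zeroPart L ≤ (abelPartC L)ᗮ) ∧ (zeroPart L ≤ (factPartC L)ᗮ) ∧
    (zeroPart L ≤ (nonsepPart L)ᗮ) ∧ (abelPartC L ≤ (factPartC L)ᗮ) ∧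
    (abelPartC L ≤ (nonsepPart L)ᗮ) ∧ (factPartC L ≤ (nonsepPart L)ᗮ) ∧
    (zeroPart L ⊔ abelPartC L ⊔ factPartC L ⊔ nonsepPart L = ⊤) ∧
    (abelPart L ≤ (factPart L)ᗮ) ∧ (abelPart L ≤ (nonsepPart L)ᗮ) ∧
    (factPart L ≤ (nonsepPart L)ᗮ) ∧
    (abelPart L ⊔ factPart L ⊔ nonsepPart L = L) := by
  classical
  set La : Submodule ℝ H := abelPart L with hLa_def
  set N : Submodule ℝ H := nonsepPart L with hN_def
  set A : Submodule ℝ H := abelPartC L with hA_def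
  set C : Submodule ℝ H := (L ⊔ L.map mulI).topologicalClosure with hC_def
  set M : Submodule ℝ H := zeroPart L with hM_def
  set F : Submodule ℝ H := factPartC L with hF_def
  have hM_eq : M = Cᗮ := rfl
  have hF_eq : F = (M ⊔ A ⊔ N)ᗮ := rfl
  have hLC : L ≤ C := le_trans le_sup_left (Submodule.le_topologicalClosure _)
  have hiLC : L.map mulI ≤ C := le_trans le_sup_right (Submodule.le_topologicalClosure _)
  have hLaL : La ≤ L := inf_le_left
  have hNL : N ≤ L := inf_le_left
  have hAC : A ≤ C := sup_le (hLaL.trans hLC) ((Submodule.map_mono hLaL).trans hiLC)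
  -- closedness facts
  have hLaClosed : IsClosed (La : Set H) := hL.inter (sympCompl_isClosed L)
  have hiLaClosed : IsClosed ((La.map mulI : Submodule ℝ H) : Set H) := map_mulI_isClosed hLaClosed
  have hiLOrthoL : La.map mulI ⟂ L := by
    rw [Submodule.isOrtho_iff_le]
    intro w hw
    rw [Submodule.mem_orthogonal]
    intro u hu
    obtain ⟨c, hc, rfl⟩ := hw
    rw [real_inner_comm]
    exact rinner_mulI_abel_left L hc hu
  have hLaOrtho : La ⟂ La.map mulI := (hiLOrthoL.mono_right hLaL).symm
  have hAclosed : IsClosed (A : Set H) := isClosed_sup_of_ortho hLaClosed hiLaClosed hLaOrtho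
  have hMclosed : IsClosed (M : Set H) := Submodule.isClosed_orthogonal _
  have hNclosed : IsClosed (N : Set H) := hL.inter (map_mulI_isClosed hL)
  -- orthogonality facts
  have hMA : M ≤ Aᗮ := Submodule.orthogonal_le hAC
  have hMN : M ≤ Nᗮ := Submodule.orthogonal_le (hNL.trans hLC)
  have hLaN : La ≤ Nᗮ := by
    intro a ha
    rw [Submodule.mem_orthogonal]
    intro n hn
    rw [rinner_eq, inner_nonsep_abel_eq_zero L hn ha, Complex.zero_re]
  have hiLaN : La.map mulI ≤ Nᗮ := fun w hw => by
    rw [Submodule.mem_orthogonal]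
    intro n hn
    obtain ⟨c, hc, rfl⟩ := hw
    rw [real_inner_comm]
    exact rinner_mulI_abel_left L hc (hNL hn)
  have hAN : A ≤ Nᗮ := sup_le hLaN hiLaN
  have hMF : M ≤ Fᗮ := by
    rw [hF_eq]
    exact le_trans (le_trans le_sup_left le_sup_left) (Submodule.le_orthogonal_orthogonal _)
  have hAF : A ≤ Fᗮ := by
    rw [hF_eq]
    exact le_trans (le_trans le_sup_right le_sup_left) (Submodule.le_orthogonal_orthogonal _)
  have hFN : F ≤ Nᗮ := by
    rw [hF_eq]
    exact Submodule.orthogonal_le le_sup_right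
  -- the big sup
  have hMAclosed : IsClosed ((M ⊔ A : Submodule ℝ H) : Set H) :=
    isClosed_sup_of_ortho hMclosed hAclosed (Submodule.isOrtho_iff_le.mpr hMA)
  have hKclosed : IsClosed ((M ⊔ A ⊔ N : Submodule ℝ H) : Set H) :=
    isClosed_sup_of_ortho hMAclosed hNclosed
      (Submodule.isOrtho_sup_left.mpr
        ⟨Submodule.isOrtho_iff_le.mpr hMN, Submodule.isOrtho_iff_le.mpr hAN⟩)
  haveI : CompleteSpace (M ⊔ A ⊔ N : Submodule ℝ H) := hKclosed.completeSpace_coe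
  have hTop : M ⊔ A ⊔ F ⊔ N = ⊤ := by
    rw [sup_right_comm (M ⊔ A) F N, hF_eq]
    exact Submodule.sup_orthogonal_of_hasOrthogonalProjection
  -- second layer
  have hLfF : factPart L ≤ F := inf_le_left
  have hLfL : factPart L ≤ L := inf_le_right
  have h8 : La ≤ (factPart L)ᗮ :=
    le_trans (le_trans (le_sup_left : La ≤ A) hAF) (Submodule.orthogonal_le hLfF)
  have h10 : factPart L ≤ Nᗮ := hLfF.trans hFN
  have h11 : La ⊔ factPart L ⊔ N = L := by
    apply le_antisymm
    · exact sup_le (sup_le hLaL hLfL) hNL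
    · intro x hx
      haveI : CompleteSpace N := hNclosed.completeSpace_coe
      haveI : CompleteSpace La := hLaClosed.completeSpace_coe
      obtain ⟨n, hn, y, hy, hxny⟩ := N.exists_add_mem_mem_orthogonal x
      have hyL : y ∈ L := by
        have : x - n ∈ L := L.sub_mem hx (hNL hn)
        have hyx : y = x - n := by rw [hxny]; abel
        rwa [hyx]
      obtain ⟨b, hb, z, hz, hyz⟩ := La.exists_add_mem_mem_orthogonal y
      have hzL : z ∈ L := by
        have : y - b ∈ L := L.sub_mem hyL (hLaL hb)
        have hzy : z = y - b := by rw [hyz]; abel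
        rwa [hzy]
      have hzN : z ∈ Nᗮ := by
        have hbN : b ∈ Nᗮ := hLaN hb
        have hzy : z = y - b := by rw [hyz]; abel
        rw [hzy]
        exact Submodule.sub_mem _ hy hbN
      have hzM : z ∈ Mᗮ := by
        rw [hM_eq]
        exact Submodule.le_orthogonal_orthogonal C (hLC hzL)
      have hziLa : z ∈ (La.map mulI)ᗮ := by
        rw [Submodule.mem_orthogonal]
        intro w hw
        obtain ⟨c, hc, rfl⟩ := hw
        exact rinner_mulI_abel_left L hc hzL
      have hzA : z ∈ Aᗮ := by
        rw [hA_def, abelPartC, ← Submodule.inf_orthogonal]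
        exact ⟨hz, hziLa⟩
      have hzF : z ∈ F := by
        rw [hF_eq, ← Submodule.inf_orthogonal, ← Submodule.inf_orthogonal]
        exact ⟨⟨hzM, hzA⟩, hzN⟩
      have hbS : b ∈ La ⊔ factPart L ⊔ N := Submodule.mem_sup_left (Submodule.mem_sup_left hb)
      have hzS : z ∈ La ⊔ factPart L ⊔ N :=
        Submodule.mem_sup_left (Submodule.mem_sup_right ⟨hzF, hzL⟩)
      have hnS : n ∈ La ⊔ factPart L ⊔ N := Submodule.mem_sup_right hn
      rw [hxny, hyz]
      exact Submodule.add_mem _ hnS (Submodule.add_mem _ hbS hzS)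
  exact ⟨hMA, hMF, hMN, hAF, hAN, hFN, hTop, h8, le_sup_left.trans hAN, h10, h11⟩
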